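/- If a function f in H^1(a,b) attains its minimum over [a,b] at a point t0 in [a,b] and 0 < α < 1, then (ABC_a D^α f)(t0) ≤ (B(α)/(1-α)) · E_α[-(α/(1-α))(t0-a)^α] · (f(t0) - f(a)) ≤ 0. -/

import Mathlib

open MeasureTheory Real Set

/-- One-parameter Mittag-Leffler function `E_α(z) = Σ z^k / Γ(αk+1)`. -/
noncomputable def mlE (α z : ℝ) : ℝ := ∑' k : ℕ, z ^ k / Real.Gamma (α * k + 1)

/-- Left ABC (Caputo with Mittag-Leffler kernel) fractional derivative of order `α`
with base point `a` and normalization constant `Bα`. -/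
noncomputable def abc (Bα α a : ℝ) (f : ℝ → ℝ) (t : ℝ) : ℝ :=
  (Bα / (1 - α)) * ∫ s in a..t, mlE α (-(α / (1 - α)) * (t - s) ^ α) * deriv f s

/-- Left ABR (Riemann–Liouville with Mittag-Leffler kernel) fractional derivative,
base point `0`. -/
noncomputable def abr (Bα α : ℝ) (f : ℝ → ℝ) (t : ℝ) : ℝ :=
  (Bα / (1 - α)) *
    deriv (fun τ => ∫ s in (0:ℝ)..τ, mlE α (-(α / (1 - α)) * (τ - s) ^ α) * f s) t

/-- The spectral kernel `K_α` in the complete-monotonicity representation of `E_α`. -/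
noncomputable def Kker (α r : ℝ) : ℝ :=
  (1 / Real.pi) * (r ^ (α - 1) * Real.sin (α * Real.pi)) /
    (r ^ (2 * α) + 2 * r ^ α * Real.cos (α * Real.pi) + 1)

/-- Laplace convolution on `[0, t]`. -/
noncomputable def lconv (f g : ℝ → ℝ) (t : ℝ) : ℝ := ∫ s in (0:ℝ)..t, f (t - s) * g s

/-- Membership in `H^1(a,b)` (together with the continuity used in the paper):
differentiable on `(a,b)` with square-integrable derivative, continuous on `[a,b]`. -/
def MemH1 (a b : ℝ) (f : ℝ → ℝ) : Prop :=
  ContinuousOn f (Set.Icc a b) ∧ DifferentiableOn ℝ f (Set.Ioo a b) ∧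
    MeasureTheory.IntegrableOn (fun s => (deriv f s) ^ 2) (Set.Ioo a b)

namespace ABCW
open Filter Topology


/-- Log-convexity interpolation: `Γ(x+1) ≤ Γ(x+α) * (x+α)^(1-α)` for `x > 0`, `0 < α < 1`. -/
lemma Gamma_interp {α : ℝ} (hα1 : 0 < α) (hα2 : α < 1) {x : ℝ} (hx : 0 < x) :
    Real.Gamma (x + 1) ≤ Real.Gamma (x + α) * (x + α) ^ (1 - α) := by
  have hxα : (0:ℝ) < x + α := by linarith
  have hxα1 : (0:ℝ) < x + α + 1 := by linarith
  have hconv := Real.convexOn_log_Gamma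
  have h := hconv.2 (mem_Ioi.2 hxα) (mem_Ioi.2 hxα1) (le_of_lt hα1) (by linarith : (0:ℝ) ≤ 1 - α)
    (by ring : α + (1 - α) = 1)
  have hcomb : α • (x + α) + (1 - α) • (x + α + 1) = x + 1 := by
    simp only [smul_eq_mul]; ring
  rw [hcomb] at h
  simp only [Function.comp_apply, smul_eq_mul] at h
  have hG1 : Real.Gamma (x + α + 1) = (x + α) * Real.Gamma (x + α) := Real.Gamma_add_one hxα.ne'
  have hGpos : 0 < Real.Gamma (x + α) := Real.Gamma_pos_of_pos hxα
  have hGpos1 : 0 < Real.Gamma (x + 1) := Real.Gamma_pos_of_pos (by linarith)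
  rw [hG1, Real.log_mul hxα.ne' hGpos.ne'] at h
  have h2 : Real.log (Real.Gamma (x + 1)) ≤
      Real.log (Real.Gamma (x + α)) + (1 - α) * Real.log (x + α) := by nlinarith
  have h3 := Real.exp_le_exp.2 h2
  rw [Real.exp_log hGpos1, Real.exp_add, Real.exp_log hGpos] at h3
  calc Real.Gamma (x+1) ≤ Real.Gamma (x+α) * Real.exp ((1-α) * Real.log (x+α)) := h3
    _ = Real.Gamma (x + α) * (x + α) ^ (1 - α) := by
        rw [Real.rpow_def_of_pos hxα, mul_comm (Real.log _)]

/-- Master summability lemma: `Σ (k+1)^m x^k / Γ(αk+γ) < ∞`. -/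
lemma summable_master {α : ℝ} (hα1 : 0 < α) (hα2 : α < 1) (γ : ℝ) (hγ : 0 < γ)
    {x : ℝ} (hx : 0 < x) (m : ℕ) :
    Summable (fun k : ℕ => (k + 1 : ℝ) ^ m * x ^ k / Real.Gamma (α * k + γ)) := by
  have hGp : ∀ k : ℕ, 0 < Real.Gamma (α * k + γ) := fun k =>
    Real.Gamma_pos_of_pos (by positivity)
  apply summable_of_ratio_norm_eventually_le (r := 1/2) (by norm_num)
  have hten : Tendsto (fun k : ℕ => (α * k + γ) ^ α / 2 ^ (1-α)) atTop atTop := by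
    apply Tendsto.atTop_div_const (by positivity)
    apply (tendsto_rpow_atTop hα1).comp
    apply tendsto_atTop_add_const_right
    exact (tendsto_natCast_atTop_atTop (R := ℝ)).const_mul_atTop hα1
  filter_upwards [hten.eventually_ge_atTop (2 * (x * 2 ^ m)), eventually_ge_atTop 1]
    with k hk hk1
  set y := α * k + γ with hy
  have hk1' : (1:ℝ) ≤ (k:ℝ) := by exact_mod_cast hk1
  have hy0 : 0 < y := by positivity
  have hyge : α ≤ y := by nlinarith
  have hyα : 0 < y + α := by linarith
  have hGpos : 0 < Real.Gamma (y + α) := Real.Gamma_pos_of_pos hyα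
  have hG0 : 0 < Real.Gamma y := hGp k
  have h2pow : (0:ℝ) < (2:ℝ) ^ (1-α) := Real.rpow_pos_of_pos (by norm_num) _
  have key : 2 * (x * 2 ^ m) * Real.Gamma y ≤ Real.Gamma (y + α) := by
    have hinterp := Gamma_interp hα1 hα2 hy0
    rw [Real.Gamma_add_one hy0.ne'] at hinterp
    have h2y : (y + α) ^ (1-α) ≤ 2 ^ (1-α) * y ^ (1-α) := by
      rw [← Real.mul_rpow (by norm_num) hy0.le]
      exact Real.rpow_le_rpow hyα.le (by linarith) (by linarith)
    have hypow : 0 < y ^ (1-α) := Real.rpow_pos_of_pos hy0 _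
    have hy_split : y ^ α * y ^ (1-α) = y := by
      rw [← Real.rpow_add hy0]; norm_num
    have e1 : Real.Gamma y * (y ^ α * y ^ (1-α)) ≤ Real.Gamma (y+α) * (2^(1-α) * y^(1-α)) := by
      rw [hy_split]
      calc Real.Gamma y * y = y * Real.Gamma y := by ring
        _ ≤ Real.Gamma (y+α) * (y+α)^(1-α) := hinterp
        _ ≤ Real.Gamma (y+α) * (2^(1-α) * y^(1-α)) := by nlinarith
    have e2 : Real.Gamma y * y ^ α ≤ Real.Gamma (y+α) * 2^(1-α) := by
      have e1' : (Real.Gamma y * y ^ α) * y ^ (1-α) ≤ (Real.Gamma (y+α) * 2^(1-α)) * y^(1-α) := by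
        ring_nf; ring_nf at e1; linarith
      exact le_of_mul_le_mul_right e1' hypow
    have hk' : 2 * (x * 2^m) * 2^(1-α) ≤ y ^ α := (le_div_iff₀ h2pow).mp hk
    have e3 : (2 * (x * 2^m) * Real.Gamma y) * 2^(1-α) ≤ Real.Gamma (y+α) * 2^(1-α) := by
      have := mul_le_mul_of_nonneg_right hk' hG0.le
      nlinarith [e2]
    exact le_of_mul_le_mul_right e3 h2pow
  have hΓeq : α * ((k:ℝ) + 1) + γ = y + α := by rw [hy]; ring
  rw [Real.norm_eq_abs, Real.norm_eq_abs]
  push_cast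
  rw [hΓeq]
  have habs1 : (0:ℝ) < ((k:ℝ)+1+1)^m * x^(k+1) / Real.Gamma (y+α) :=
    div_pos (by positivity) hGpos
  have habs2 : (0:ℝ) < ((k:ℝ)+1)^m * x^k / Real.Gamma y := div_pos (by positivity) hG0
  rw [abs_of_pos habs1, abs_of_pos habs2]
  rw [show (1/2 : ℝ) * (((k:ℝ)+1)^m * x^k / Real.Gamma y)
      = ((1/2) * (((k:ℝ)+1)^m * x^k)) / Real.Gamma y by ring]
  rw [div_le_div_iff₀ hGpos hG0]
  have hstep : ((k:ℝ)+1+1)^m ≤ 2^m * ((k:ℝ)+1)^m := by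
    rw [← mul_pow]
    apply pow_le_pow_left₀ (by positivity)
    linarith
  calc ((k:ℝ)+1+1)^m * x^(k+1) * Real.Gamma y
      ≤ 2^m * ((k:ℝ)+1)^m * (x * x^k) * Real.Gamma y := by
        rw [pow_succ, mul_comm (x^k) x]
        nlinarith [mul_le_mul_of_nonneg_right hstep
          (show (0:ℝ) ≤ x * x^k * Real.Gamma y by positivity)]
    _ = (1/2) * (((k:ℝ)+1)^m * x^k) * (2 * (x * 2^m) * Real.Gamma y) := by ring
    _ ≤ (1/2) * (((k:ℝ)+1)^m * x^k) * Real.Gamma (y+α) := by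
        nlinarith [mul_le_mul_of_nonneg_left key
          (show (0:ℝ) ≤ (1/2) * (((k:ℝ)+1)^m * x^k) by positivity)]



/-- summability of `(k+1)^n r^k` for `0 < r < 1`. -/
lemma summable_poly_geom {r : ℝ} (hr0 : 0 < r) (hr : r < 1) (n : ℕ) :
    Summable (fun k : ℕ => ((k:ℝ)+1)^n * r^k) := by
  have h := summable_pow_mul_geometric_of_norm_lt_one (R := ℝ) n
    (r := r) (by rw [Real.norm_eq_abs, abs_of_pos hr0]; exact hr)
  have h2 : Summable (fun k : ℕ => ((k+1:ℕ):ℝ)^n * r^(k+1)) :=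
    (summable_nat_add_iff 1).mpr h
  have h3 := h2.mul_right r⁻¹
  apply h3.congr
  intro k
  push_cast
  rw [pow_succ]
  field_simp

noncomputable def SGterm (w b : ℕ → ℝ) (n : ℕ) (s : ℝ) (k : ℕ) : ℝ :=
  w k * (∏ j ∈ Finset.range n, (b k + j)) * s ^ (-(b k + n))

noncomputable def SG (w b : ℕ → ℝ) (n : ℕ) (s : ℝ) : ℝ := ∑' k : ℕ, SGterm w b n s k

noncomputable def SGbnd (W l α p : ℝ) (n : ℕ) (k : ℕ) : ℝ :=
  (W * (((n:ℝ)+3)^n * max 1 (p^(-(2:ℝ))) * p^(-(n:ℝ)))) * (((k:ℝ)+1)^n * (l * p^(-α))^k)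

section SGfacts

variable {α l W : ℝ} {w b : ℕ → ℝ}

lemma geom_ratio_lt_one (hα1 : 0 < α) (hl : 0 < l) {p : ℝ} (hp : l ^ α⁻¹ < p) :
    l * p^(-α) < 1 := by
  have hp0 : 0 < p := lt_of_le_of_lt (Real.rpow_nonneg hl.le _) hp
  have hpα : l < p ^ α := by
    have h1 : (l ^ α⁻¹) ^ α < p ^ α :=
      Real.rpow_lt_rpow (Real.rpow_nonneg hl.le _) hp hα1
    rw [← Real.rpow_mul hl.le, inv_mul_cancel₀ hα1.ne', Real.rpow_one] at h1
    exact h1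
  have hppos : 0 < p ^ α := Real.rpow_pos_of_pos hp0 _
  rw [Real.rpow_neg hp0.le]
  rw [mul_inv_lt_iff₀ hppos, one_mul]
  exact hpα

lemma summable_SGbnd (hα1 : 0 < α) (hl : 0 < l) {p : ℝ} (hp : l ^ α⁻¹ < p) (n : ℕ) :
    Summable (SGbnd W l α p n) := by
  have hp0 : 0 < p := lt_of_le_of_lt (Real.rpow_nonneg hl.le _) hp
  have hr0 : 0 < l * p^(-α) := mul_pos hl (Real.rpow_pos_of_pos hp0 _)
  exact ((summable_poly_geom hr0 (geom_ratio_lt_one hα1 hl hp) n).mul_left _)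

lemma SGterm_bound (hα1 : 0 < α) (hα2 : α < 1) (hl : 0 < l)
    (hw : ∀ k, |w k| ≤ W * l ^ k)
    (hb0 : ∀ k, 0 < b k) (hbl : ∀ k, α*k ≤ b k) (hbu : ∀ k, b k ≤ α*k+2)
    {p s : ℝ} (hp0 : 0 < p) (hps : p ≤ s) (n k : ℕ) :
    |SGterm w b n s k| ≤ SGbnd W l α p n k := by
  have hs0 : 0 < s := lt_of_lt_of_le hp0 hps
  have hP0 : (0:ℝ) ≤ ∏ j ∈ Finset.range n, (b k + j) :=
    Finset.prod_nonneg fun j _ => add_nonneg (hb0 k).le (Nat.cast_nonneg j)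
  have hS0 : (0:ℝ) < s ^ (-(b k + n)) := Real.rpow_pos_of_pos hs0 _
  have hM1 : (1:ℝ) ≤ max 1 (p^(-(2:ℝ))) := le_max_left _ _
  have hM0 : (0:ℝ) < max 1 (p^(-(2:ℝ))) := lt_of_lt_of_le one_pos hM1
  -- bound on the rpow factor
  have hrp : s ^ (-(b k + n)) ≤ p ^ (-(α*k)) * max 1 (p^(-(2:ℝ))) * p^(-(n:ℝ)) := by
    have h1 : s ^ (-(b k + n)) ≤ p ^ (-(b k + n)) :=
      Real.rpow_le_rpow_of_nonpos hp0 hps (by have := hb0 k; push_cast; nlinarith)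
    have h2 : p ^ (-(b k + (n:ℝ))) = p ^ (-(b k)) * p ^ (-(n:ℝ)) := by
      rw [← Real.rpow_add hp0]; ring_nf
    have h3 : p ^ (-(b k)) ≤ p ^ (-(α*k)) * max 1 (p^(-(2:ℝ))) := by
      rcases le_or_gt 1 p with h1p | h1p
      · have := Real.rpow_le_rpow_of_exponent_le h1p
          (show -(b k) ≤ -(α*k) by linarith [hbl k])
        calc p ^ (-(b k)) ≤ p ^ (-(α*k)) := this
          _ ≤ p ^ (-(α*k)) * max 1 (p^(-(2:ℝ))) := le_mul_of_one_le_right (by positivity) hM1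
      · have h4 : p ^ (-(b k)) ≤ p ^ (-(α*k+2)) :=
          Real.rpow_le_rpow_of_exponent_ge hp0 h1p.le (by linarith [hbu k])
        have h5 : p ^ (-(α*k+2)) = p ^ (-(α*k)) * p^(-(2:ℝ)) := by
          rw [← Real.rpow_add hp0]; ring_nf
        calc p ^ (-(b k)) ≤ p ^ (-(α*k)) * p^(-(2:ℝ)) := by rw [← h5]; exact h4
          _ ≤ p ^ (-(α*k)) * max 1 (p^(-(2:ℝ))) := by
              apply mul_le_mul_of_nonneg_left (le_max_right _ _) (by positivity)
    calc s ^ (-(b k + n)) ≤ p ^ (-(b k + n)) := h1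
      _ = p ^ (-(b k)) * p ^ (-(n:ℝ)) := h2
      _ ≤ (p ^ (-(α*k)) * max 1 (p^(-(2:ℝ)))) * p ^ (-(n:ℝ)) := by
          apply mul_le_mul_of_nonneg_right h3 (by positivity)
      _ = p ^ (-(α*k)) * max 1 (p^(-(2:ℝ))) * p^(-(n:ℝ)) := by ring
  -- bound on the product factor
  have hprod : (∏ j ∈ Finset.range n, (b k + j)) ≤ (((n:ℝ)+3)*((k:ℝ)+1))^n := by
    calc (∏ j ∈ Finset.range n, (b k + j))
        ≤ ∏ j ∈ Finset.range n, (((n:ℝ)+3)*((k:ℝ)+1)) := by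
          apply Finset.prod_le_prod (fun j _ => add_nonneg (hb0 k).le (Nat.cast_nonneg j))
          intro j hj
          have hjn : (j:ℝ) ≤ (n:ℝ) - 1 := by
            have := Finset.mem_range.mp hj
            have : (j:ℝ) + 1 ≤ n := by exact_mod_cast this
            linarith
          have hk' : α * k ≤ (k:ℝ) := by nlinarith [Nat.cast_nonneg (α := ℝ) k]
          have := hbu k
          nlinarith [Nat.cast_nonneg (α := ℝ) k, Nat.cast_nonneg (α := ℝ) n]
      _ = (((n:ℝ)+3)*((k:ℝ)+1))^n := by
          rw [Finset.prod_const, Finset.card_range]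
  -- assemble
  have hW0 : 0 ≤ W := le_trans (abs_nonneg (w 0)) (by simpa using hw 0)
  have hw' := hw k
  have hwa : (0:ℝ) ≤ |w k| := abs_nonneg _
  rw [SGterm, SGbnd, abs_mul, abs_mul, abs_of_nonneg hP0, abs_of_pos hS0]
  have hgoal : |w k| * (∏ j ∈ Finset.range n, (b k + j)) * s ^ (-(b k + n))
      ≤ (W * l^k) * ((((n:ℝ)+3)*((k:ℝ)+1))^n) * (p ^ (-(α*k)) * max 1 (p^(-(2:ℝ))) * p^(-(n:ℝ))) := by
    have h1 : |w k| * (∏ j ∈ Finset.range n, (b k + j)) ≤ (W * l^k) * ((((n:ℝ)+3)*((k:ℝ)+1))^n) :=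
      mul_le_mul hw' hprod hP0 (le_trans hwa hw')
    exact mul_le_mul h1 hrp hS0.le (mul_nonneg (mul_nonneg hW0 (by positivity)) (by positivity))
  refine le_trans hgoal (le_of_eq ?_)
  have hexp : p ^ (-(α*k)) = (p ^ (-α))^k := by
    rw [← Real.rpow_natCast (p ^ (-α)) k, ← Real.rpow_mul hp0.le]
    ring_nf
  rw [hexp, mul_pow, mul_pow]
  ring

lemma summable_SGterm (hα1 : 0 < α) (hα2 : α < 1) (hl : 0 < l)
    (hw : ∀ k, |w k| ≤ W * l ^ k)
    (hb0 : ∀ k, 0 < b k) (hbl : ∀ k, α*k ≤ b k) (hbu : ∀ k, b k ≤ α*k+2)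
    {s : ℝ} (hs : l ^ α⁻¹ < s) (n : ℕ) :
    Summable (fun k => SGterm w b n s k) := by
  have hs0 : 0 < s := lt_of_le_of_lt (Real.rpow_nonneg hl.le _) hs
  exact Summable.of_norm_bounded (summable_SGbnd hα1 hl hs n)
    (fun k => SGterm_bound hα1 hα2 hl hw hb0 hbl hbu hs0 le_rfl n k)

lemma SG_hasDerivAt (hα1 : 0 < α) (hα2 : α < 1) (hl : 0 < l)
    (hw : ∀ k, |w k| ≤ W * l ^ k)
    (hb0 : ∀ k, 0 < b k) (hbl : ∀ k, α*k ≤ b k) (hbu : ∀ k, b k ≤ α*k+2)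
    {s : ℝ} (hs : l ^ α⁻¹ < s) (n : ℕ) :
    HasDerivAt (SG w b n) (-(SG w b (n+1) s)) s := by
  set p : ℝ := (l ^ α⁻¹ + s)/2 with hpdef
  have hs₀0 : 0 ≤ l ^ α⁻¹ := Real.rpow_nonneg hl.le _
  have hp : l ^ α⁻¹ < p := by rw [hpdef]; linarith
  have hp0 : 0 < p := lt_of_le_of_lt hs₀0 hp
  have hps : p < s := by rw [hpdef]; linarith
  have hmem : s ∈ Ioi p := hps
  have main : HasDerivAt (fun z => ∑' k, SGterm w b n z k)
      (∑' k, -(SGterm w b (n+1) s k)) s := by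
    apply hasDerivAt_tsum_of_isPreconnected (u := SGbnd W l α p (n+1))
      (summable_SGbnd hα1 hl hp (n+1)) isOpen_Ioi (isPreconnected_Ioi)
      (y₀ := s) (hy₀ := hmem) (hy := hmem)
    · -- HasDerivAt of each term
      intro k y hy
      have hy0 : 0 < y := lt_trans hp0 hy
      have hd : HasDerivAt (fun z => SGterm w b n z k) _ y := (Real.hasDerivAt_rpow_const (x := y) (p := -(b k + n)) (Or.inl hy0.ne')).const_mul
        (w k * (∏ j ∈ Finset.range n, (b k + j)))
      refine hd.congr_deriv ?_
      rw [SGterm, Finset.prod_range_succ]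
      push_cast
      rw [show -(b k + ((n:ℝ)+1)) = -(b k + n) - 1 by ring]
      ring
    · -- bound
      intro k y hy
      rw [norm_neg, Real.norm_eq_abs]
      exact SGterm_bound hα1 hα2 hl hw hb0 hbl hbu hp0 (le_of_lt hy) (n+1) k
    · exact summable_SGterm hα1 hα2 hl hw hb0 hbl hbu hs n
  rw [SG, tsum_neg] at *
  exact main

end SGfacts



noncomputable def evalT (α l : ℝ) (P : ℝ × ℝ × ℕ) (s : ℝ) : ℝ :=
  P.1 * s ^ P.2.1 * (s ^ α + l) ^ (-(P.2.2:ℝ))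

noncomputable def evalR (α l : ℝ) (L : List (ℝ × ℝ × ℕ)) (s : ℝ) : ℝ :=
  (L.map (fun P => evalT α l P s)).sum

def derT (α : ℝ) (P : ℝ × ℝ × ℕ) : List (ℝ × ℝ × ℕ) :=
  [(P.1 * P.2.1, P.2.1 - 1, P.2.2), (-(P.1 * α * P.2.2), P.2.1 + α - 1, P.2.2 + 1)]

def derR (α : ℝ) (L : List (ℝ × ℝ × ℕ)) : List (ℝ × ℝ × ℕ) := L.flatMap (derT α)

lemma evalR_nil (α l s : ℝ) : evalR α l [] s = 0 := rfl

lemma evalR_cons (α l s : ℝ) (P L) : evalR α l (P :: L) s = evalT α l P s + evalR α l L s := by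
  simp [evalR]

lemma evalR_append (α l s : ℝ) (A B) :
    evalR α l (A ++ B) s = evalR α l A s + evalR α l B s := by
  simp [evalR]

lemma evalT_hasDerivAt {α l : ℝ} (hα1 : 0 < α) (hl : 0 < l) {s : ℝ} (hs : 0 < s)
    (P : ℝ × ℝ × ℕ) :
    HasDerivAt (fun z => evalT α l P z) (evalR α l (derT α P) s) s := by
  obtain ⟨d, e, m⟩ := P
  have hbase : 0 < s ^ α + l := by positivity
  have hinner : HasDerivAt (fun z : ℝ => z ^ α + l) (α * s ^ (α - 1)) s := by
    simpa using (Real.hasDerivAt_rpow_const (x := s) (p := α) (Or.inl hs.ne')).add_const l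
  have houter : HasDerivAt (fun z : ℝ => (z ^ α + l) ^ (-(m:ℝ)))
      (α * s ^ (α - 1) * (-(m:ℝ)) * (s ^ α + l) ^ (-(m:ℝ) - 1)) s :=
    hinner.rpow_const (Or.inl hbase.ne')
  have h1 : HasDerivAt (fun z : ℝ => d * z ^ e) (d * (e * s ^ (e - 1))) s :=
    (Real.hasDerivAt_rpow_const (x := s) (p := e) (Or.inl hs.ne')).const_mul d
  have htot : HasDerivAt (fun z => d * z ^ e * (z ^ α + l) ^ (-(m:ℝ))) _ s := h1.mul houter
  show HasDerivAt (fun z => d * z ^ e * (z ^ α + l) ^ (-(m:ℝ))) (evalR α l (derT α (d, e, m)) s) s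
  convert htot using 1
  show (d * e) * s ^ (e-1) * (s^α + l) ^ (-(m:ℝ)) +
      ((-(d * α * m)) * s ^ (e + α - 1) * (s^α+l) ^ (-(((m+1):ℕ):ℝ)) + 0) = _
  have e1 : s ^ (e + α - 1) = s ^ e * s ^ (α - 1) := by
    rw [show e + α - 1 = e + (α - 1) by ring, Real.rpow_add hs]
  have e2 : (-(((m+1):ℕ):ℝ)) = -(m:ℝ) - 1 := by push_cast; ring
  rw [e1, e2]
  ring

lemma evalR_hasDerivAt {α l : ℝ} (hα1 : 0 < α) (hl : 0 < l) {s : ℝ} (hs : 0 < s) (L) :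
    HasDerivAt (fun z => evalR α l L z) (evalR α l (derR α L) s) s := by
  induction L with
  | nil => simpa [evalR, derR] using hasDerivAt_const s (0:ℝ)
  | cons P L ih =>
      have h1 := (evalT_hasDerivAt hα1 hl hs P).add ih
      have : derR α (P :: L) = derT α P ++ derR α L := by simp [derR]
      rw [show (fun z => evalR α l (P :: L) z) = fun z => evalT α l P z + evalR α l L z by
        funext z; rw [evalR_cons], this, evalR_append]
      exact h1

def SOK (n : ℕ) (L : List (ℝ × ℝ × ℕ)) : Prop :=
  ∀ P ∈ L, 0 ≤ (-1:ℝ)^n * P.1 ∧ P.2.1 ≤ 0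

lemma SOK_derR {α : ℝ} (hα1 : 0 < α) (hα2 : α < 1) {n : ℕ} {L} (h : SOK n L) :
    SOK (n+1) (derR α L) := by
  intro P' hP'
  rw [derR, List.mem_flatMap] at hP'
  obtain ⟨P, hP, hP'mem⟩ := hP'
  obtain ⟨hsgn, hexp⟩ := h P hP
  simp only [derT, List.mem_cons, List.mem_singleton] at hP'mem
  rcases hP'mem with rfl | hP'mem
  · constructor
    · have : (-1:ℝ)^(n+1) * (P.1 * P.2.1) = ((-1:ℝ)^n * P.1) * (-P.2.1) := by
        rw [pow_succ]; ring
      rw [this]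
      exact mul_nonneg hsgn (by linarith)
    · show P.2.1 - 1 ≤ 0; linarith
  · rcases hP'mem with rfl | h'
    · constructor
      · have : (-1:ℝ)^(n+1) * (-(P.1 * α * P.2.2)) = ((-1:ℝ)^n * P.1) * (α * P.2.2) := by
          rw [pow_succ]; ring
        rw [this]
        exact mul_nonneg hsgn (by positivity)
      · show P.2.1 + α - 1 ≤ 0; linarith
    · exact absurd h' List.not_mem_nil

lemma SOK_eval {α l : ℝ} (hl : 0 < l) {n : ℕ} {L} (h : SOK n L) {s : ℝ} (hs : 0 < s) :
    0 ≤ (-1:ℝ)^n * evalR α l L s := by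
  induction L with
  | nil => simp [evalR_nil]
  | cons P L ih =>
      have h1 : 0 ≤ (-1:ℝ)^n * evalR α l L s := ih (fun P hP => h P (List.mem_cons_of_mem _ hP))
      have h2 : 0 ≤ (-1:ℝ)^n * evalT α l P s := by
        obtain ⟨hsgn, _⟩ := h P List.mem_cons_self
        rw [evalT, show (-1:ℝ)^n * (P.1 * s ^ P.2.1 * (s^α+l) ^ (-(P.2.2:ℝ)))
          = ((-1:ℝ)^n * P.1) * (s ^ P.2.1 * (s^α+l) ^ (-(P.2.2:ℝ))) by ring]
        have hb : (0:ℝ) < s ^ α + l := by positivity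
        exact mul_nonneg hsgn (mul_nonneg (Real.rpow_nonneg hs.le _) (Real.rpow_nonneg hb.le _))
      rw [evalR_cons, mul_add]
      linarith

lemma SOK_iter {α : ℝ} (hα1 : 0 < α) (hα2 : α < 1) {L0} (h0 : SOK 0 L0) (n : ℕ) :
    SOK n ((derR α)^[n] L0) := by
  induction n with
  | zero => simpa using h0
  | succ n ih => rw [Function.iterate_succ_apply']; exact SOK_derR hα1 hα2 ih



noncomputable def xseq (n : ℕ) (β : ℝ) : ℝ :=
  (∏ j ∈ Finset.range n, (β + j)) / ((Nat.factorial n : ℝ) * (n:ℝ) ^ (β - 1))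

lemma xseq_nonneg {β : ℝ} (hβ : 0 < β) (n : ℕ) : 0 ≤ xseq n β := by
  rw [xseq]
  apply div_nonneg
  · exact Finset.prod_nonneg fun j _ => add_nonneg hβ.le (Nat.cast_nonneg j)
  · have h : (0:ℝ) < (Nat.factorial n : ℝ) := by exact_mod_cast n.factorial_pos
    positivity

lemma xseq_tendsto {β : ℝ} (hβ : 0 < β) :
    Tendsto (fun n => xseq n β) atTop (𝓝 (1 / Real.Gamma β)) := by
  have hΓ : Real.Gamma β ≠ 0 := (Real.Gamma_pos_of_pos hβ).ne'
  have h1 : Tendsto (fun n : ℕ => ((n:ℝ) / ((n:ℝ) + β)) * (Real.GammaSeq β n)⁻¹) atTop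
      (𝓝 (1 * (Real.Gamma β)⁻¹)) :=
    (tendsto_natCast_div_add_atTop β).mul ((Real.GammaSeq_tendsto_Gamma β).inv₀ hΓ)
  rw [one_mul, ← one_div] at h1
  apply h1.congr'
  filter_upwards [eventually_ge_atTop 1] with n hn
  have hn0 : (0:ℝ) < n := by exact_mod_cast hn
  have hsplit : (∏ j ∈ Finset.range (n+1), (β + j))
      = (∏ j ∈ Finset.range n, (β + j)) * (β + n) := Finset.prod_range_succ _ _
  have hnb : (n:ℝ) ^ β = (n:ℝ) * (n:ℝ) ^ (β - 1) := by
    rw [show β = 1 + (β - 1) by ring]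
    rw [Real.rpow_add hn0, Real.rpow_one]
    ring_nf
  have hfac : (0:ℝ) < (Nat.factorial n : ℝ) := by exact_mod_cast n.factorial_pos
  have hpow : (0:ℝ) < (n:ℝ) ^ (β - 1) := Real.rpow_pos_of_pos hn0 _
  have hβn : (0:ℝ) < β + n := by positivity
  have hprodpos : (0:ℝ) < ∏ j ∈ Finset.range n, (β + j) :=
    Finset.prod_pos fun j _ => by positivity
  rw [Real.GammaSeq, hsplit, xseq, hnb]
  field_simp
  ring

/-- Bernoulli monotonicity: `xseq` is nonincreasing in `n ≥ 1` when `β ≥ 1`. -/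
lemma xseq_succ_le {β : ℝ} (hβ : 1 ≤ β) {n : ℕ} (hn : 1 ≤ n) :
    xseq (n+1) β ≤ xseq n β := by
  have hn0 : (0:ℝ) < n := by exact_mod_cast hn
  have hβ0 : (0:ℝ) < β := by linarith
  have hnpow : (0:ℝ) < (n:ℝ) ^ β := Real.rpow_pos_of_pos hn0 _
  have key : (β + n) * (n:ℝ) ^ (β - 1) ≤ ((n:ℝ)+1) ^ β := by
    have hinv : (0:ℝ) ≤ 1/(n:ℝ) := by positivity
    have hb : 1 + β * (1/(n:ℝ)) ≤ (1 + 1/(n:ℝ)) ^ β :=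
      one_add_mul_self_le_rpow_one_add (by linarith) hβ
    have e2 : (n:ℝ) ^ (β-1) = (n:ℝ)^β / n := by
      rw [Real.rpow_sub hn0, Real.rpow_one]
    calc (β + n) * (n:ℝ) ^ (β-1) = (n:ℝ)^β * (1 + β * (1/(n:ℝ))) := by
          rw [e2]; field_simp; ring
      _ ≤ (n:ℝ)^β * (1 + 1/(n:ℝ))^β := by nlinarith
      _ = ((n:ℝ)+1)^β := by
          rw [← Real.mul_rpow hn0.le (by positivity)]
          congr 1
          field_simp
  have hfac : (0:ℝ) < (Nat.factorial n : ℝ) := by exact_mod_cast n.factorial_pos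
  have hpow : (0:ℝ) < (n:ℝ) ^ (β - 1) := Real.rpow_pos_of_pos hn0 _
  have hpow1 : (0:ℝ) < ((n:ℝ)+1) ^ (β - 1) := Real.rpow_pos_of_pos (by positivity) _
  have hP : (0:ℝ) ≤ ∏ j ∈ Finset.range n, (β + j) :=
    Finset.prod_nonneg fun j _ => add_nonneg hβ0.le (Nat.cast_nonneg j)
  rw [xseq, xseq, Finset.prod_range_succ]
  have hcast : ((Nat.factorial (n+1) : ℕ) : ℝ) = ((n:ℝ)+1) * (Nat.factorial n : ℝ) := by
    push_cast [Nat.factorial_succ]; ring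
  have hfac1 : (0:ℝ) < ((Nat.factorial (n+1) : ℕ) : ℝ) := by
    exact_mod_cast (n+1).factorial_pos
  rw [div_le_div_iff₀ (by push_cast at hfac1 ⊢; positivity) (by positivity)]
  have e3 : ((n:ℝ)+1)*((n:ℝ)+1)^(β-1) = ((n:ℝ)+1)^β := by
    rw [Real.rpow_sub (by positivity), Real.rpow_one]
    field_simp
  have hmul := mul_le_mul_of_nonneg_left key (mul_nonneg hP hfac.le)
  calc (∏ j ∈ Finset.range n, (β + j)) * (β + n) * ((Nat.factorial n :ℝ) * (n:ℝ)^(β-1))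
      = (∏ j ∈ Finset.range n, (β + j)) * (Nat.factorial n :ℝ) * ((β + n) * (n:ℝ)^(β-1)) := by
        ring
    _ ≤ (∏ j ∈ Finset.range n, (β + j)) * (Nat.factorial n :ℝ) * (((n:ℝ)+1)^β) := hmul
    _ = (∏ j ∈ Finset.range n, (β + j)) * (((Nat.factorial (n+1) : ℕ):ℝ) * ((n:ℝ)+1)^(β-1)) := by
        rw [hcast, ← e3]; ring
    _ = (∏ j ∈ Finset.range n, (β + j)) * ((Nat.factorial (n+1) : ℝ) * (((n+1:ℕ):ℝ))^(β-1)) := by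
        push_cast
        ring

lemma xseq_le_of_ge {β : ℝ} (hβ : 1 ≤ β) {N n : ℕ} (hN : 1 ≤ N) (hn : N ≤ n) :
    xseq n β ≤ xseq N β := by
  induction n, hn using Nat.le_induction with
  | base => exact le_refl _
  | succ n hNn ih => exact le_trans (xseq_succ_le hβ (le_trans hN hNn)) ih

/-- Harmonic sum bound. -/
lemma harm_le {m : ℕ} (hm : 1 ≤ m) :
    (∑ j ∈ Finset.range m, 1/((j:ℝ)+1)) ≤ 1 + Real.log m := by
  induction m, hm using Nat.le_induction with
  | base => simp
  | succ m hm ih =>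
      rw [Finset.sum_range_succ]
      have hm0 : (0:ℝ) < m := by exact_mod_cast hm
      have hlog : 1/((m:ℝ)+1) ≤ Real.log ((m:ℝ)+1) - Real.log m := by
        have h1 := Real.log_le_sub_one_of_pos (show (0:ℝ) < (m:ℝ)/((m:ℝ)+1) by positivity)
        rw [Real.log_div hm0.ne' (by positivity)] at h1
        have h2 : (m:ℝ)/((m:ℝ)+1) - 1 = -(1/((m:ℝ)+1)) := by field_simp; ring
        rw [h2] at h1
        linarith
      push_cast
      linarith

/-- Bound for small exponents: `xseq n β ≤ e` when `0 < β ≤ 1`, `n ≥ 1`. -/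
lemma xseq_le_exp {β : ℝ} (hβ0 : 0 < β) (hβ1 : β ≤ 1) {n : ℕ} (hn : 1 ≤ n) :
    xseq n β ≤ Real.exp 1 := by
  have hexp1 : (1:ℝ) ≤ Real.exp 1 := by linarith [Real.add_one_le_exp 1]
  rcases n with _ | m
  · omega
  rcases Nat.eq_zero_or_pos m with rfl | hm
  · -- n = 1
    rw [xseq]
    norm_num
    linarith
  · have hm0 : (0:ℝ) < m := by exact_mod_cast hm
    set Q : ℝ := ∏ j ∈ Finset.range m, (1 + β/((j:ℝ)+1)) with hQdef
    have hfacm : (0:ℝ) < (Nat.factorial m : ℝ) := by exact_mod_cast m.factorial_pos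
    -- numerator factorization
    have hnum : (∏ j ∈ Finset.range (m+1), (β + j)) = β * ((Nat.factorial m : ℝ) * Q) := by
      rw [Finset.prod_range_succ']
      have : ∀ j ∈ Finset.range m, β + ((j:ℝ)+1) = ((j:ℝ)+1) * (1 + β/((j:ℝ)+1)) := by
        intro j _
        have : ((j:ℝ)+1) ≠ 0 := by positivity
        field_simp
        ring
      rw [Finset.prod_congr rfl (fun j hj => by push_cast; rw [this j hj])]
      rw [Finset.prod_mul_distrib]
      have hfact : (∏ j ∈ Finset.range m, ((j:ℝ)+1)) = (Nat.factorial m : ℝ) := by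
        rw [← Finset.prod_range_add_one_eq_factorial]
        push_cast
        rfl
      push_cast
      rw [hfact]
      ring
    -- Q bound
    have hQle : Q ≤ Real.exp β * (m:ℝ)^β := by
      have h1 : Q ≤ ∏ j ∈ Finset.range m, Real.exp (β/((j:ℝ)+1)) := by
        apply Finset.prod_le_prod
        · intro j _; positivity
        · intro j _
          have := Real.add_one_le_exp (β/((j:ℝ)+1))
          linarith
      have h2 : (∏ j ∈ Finset.range m, Real.exp (β/((j:ℝ)+1)))
          = Real.exp (β * ∑ j ∈ Finset.range m, 1/((j:ℝ)+1)) := by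
        rw [← Real.exp_sum, Finset.mul_sum]
        congr 1
        apply Finset.sum_congr rfl
        intro j _
        ring
      have h3 : β * ∑ j ∈ Finset.range m, 1/((j:ℝ)+1) ≤ β * (1 + Real.log m) :=
        mul_le_mul_of_nonneg_left (harm_le hm) hβ0.le
      have h4 : Real.exp (β * (1 + Real.log m)) = Real.exp β * (m:ℝ)^β := by
        rw [show β * (1 + Real.log m) = β + Real.log m * β by ring, Real.exp_add]
        congr 1
        rw [Real.rpow_def_of_pos hm0]
      calc Q ≤ Real.exp (β * ∑ j ∈ Finset.range m, 1/((j:ℝ)+1)) := by rw [← h2]; exact h1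
        _ ≤ Real.exp (β * (1 + Real.log m)) := Real.exp_le_exp.2 h3
        _ = Real.exp β * (m:ℝ)^β := h4
    -- denominator
    have hden : (Nat.factorial (m+1) : ℝ) * ((m:ℝ)+1)^(β-1)
        = (Nat.factorial m : ℝ) * ((m:ℝ)+1)^β := by
      have e3 : ((m:ℝ)+1)*((m:ℝ)+1)^(β-1) = ((m:ℝ)+1)^β := by
        rw [Real.rpow_sub (by positivity), Real.rpow_one]
        field_simp
      push_cast [Nat.factorial_succ]
      rw [← e3]
      ring
    have hQ0 : 0 ≤ Q := Finset.prod_nonneg fun j _ => by positivity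
    have hpowm1 : (0:ℝ) < ((m:ℝ)+1)^β := Real.rpow_pos_of_pos (by positivity) _
    have hmono : (m:ℝ)^β ≤ ((m:ℝ)+1)^β := Real.rpow_le_rpow hm0.le (by linarith) hβ0.le
    have heβ : Real.exp β ≤ Real.exp 1 := Real.exp_le_exp.2 hβ1
    have hxseq : xseq (m+1) β = β * Q / ((m:ℝ)+1)^β := by
      rw [xseq, hnum]
      push_cast
      push_cast at hden
      rw [hden]
      field_simp
    rw [hxseq]
    have hfinal : β * Q ≤ Real.exp 1 * ((m:ℝ)+1)^β := by
      calc β * Q ≤ 1 * Q := mul_le_mul_of_nonneg_right hβ1 hQ0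
        _ = Q := one_mul Q
        _ ≤ Real.exp β * (m:ℝ)^β := hQle
        _ ≤ Real.exp 1 * ((m:ℝ)+1)^β := by
            apply mul_le_mul heβ hmono (by positivity) (by positivity)
    rw [div_le_iff₀ hpowm1]
    exact hfinal


lemma F_eq_scaled {t : ℝ} (ht : 0 < t) (w b : ℕ → ℝ) {n : ℕ} (hn : 1 ≤ n) (k : ℕ) :
    w k * xseq n (b k) * t ^ (b k - 1)
      = (((n:ℝ)/t) ^ ((n:ℝ)+1) / (Nat.factorial n : ℝ)) * SGterm w b n ((n:ℝ)/t) k := by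
  have hn0 : (0:ℝ) < n := by exact_mod_cast hn
  have hs0 : (0:ℝ) < (n:ℝ)/t := by positivity
  have hfacn : (0:ℝ) < (Nat.factorial n : ℝ) := by exact_mod_cast n.factorial_pos
  set P : ℝ := ∏ j ∈ Finset.range n, (b k + (j:ℝ)) with hP
  have e0 : ((n:ℝ)+1) + (-(b k + (n:ℝ))) = 1 - b k := by ring
  have e1 : ((n:ℝ)/t) ^ ((n:ℝ)+1) * ((n:ℝ)/t) ^ (-(b k + (n:ℝ))) = ((n:ℝ)/t) ^ (1 - b k) := by
    rw [← Real.rpow_add hs0, e0]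
  have e2 : ((n:ℝ)/t) ^ (1 - b k) = (n:ℝ) ^ (1 - b k) * t ^ (b k - 1) := by
    rw [Real.div_rpow hn0.le ht.le, div_eq_mul_inv, ← Real.rpow_neg ht.le]
    ring_nf
  have e3 : (n:ℝ) ^ (1 - b k) = ((n:ℝ) ^ (b k - 1))⁻¹ := by
    rw [show (1:ℝ) - b k = -(b k - 1) by ring, Real.rpow_neg hn0.le]
  have hnpow : (0:ℝ) < (n:ℝ) ^ (b k - 1) := Real.rpow_pos_of_pos hn0 _
  have hLHS : w k * xseq n (b k) * t ^ (b k - 1)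
      = w k * P * (n:ℝ)^(1 - b k) * t ^ (b k - 1) / (Nat.factorial n : ℝ) := by
    rw [xseq, e3, ← hP, div_eq_mul_inv, mul_inv, div_eq_mul_inv]
    ring
  have hRHS : (((n:ℝ)/t) ^ ((n:ℝ)+1) / (Nat.factorial n : ℝ)) * SGterm w b n ((n:ℝ)/t) k
      = w k * P * (n:ℝ)^(1 - b k) * t ^ (b k - 1) / (Nat.factorial n : ℝ) := by
    rw [SGterm, ← hP]
    calc (((n:ℝ)/t) ^ ((n:ℝ)+1) / (Nat.factorial n : ℝ)) * (w k * P * ((n:ℝ)/t) ^ (-(b k + (n:ℝ))))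
        = (((n:ℝ)/t) ^ ((n:ℝ)+1) * ((n:ℝ)/t) ^ (-(b k + (n:ℝ)))) * (w k * P) / (Nat.factorial n : ℝ) := by
          ring
      _ = ((n:ℝ) ^ (1 - b k) * t ^ (b k - 1)) * (w k * P) / (Nat.factorial n : ℝ) := by
          rw [e1, e2]
      _ = w k * P * (n:ℝ)^(1 - b k) * t ^ (b k - 1) / (Nat.factorial n : ℝ) := by ring
  exact hLHS.trans hRHS.symm

lemma tsum_PW_nonneg {α l W : ℝ} {w b : ℕ → ℝ}
    (hα1 : 0 < α) (hα2 : α < 1) (hl : 0 < l)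
    (hw : ∀ k, |w k| ≤ W * l ^ k)
    (hb0 : ∀ k, 0 < b k) (hbl : ∀ k, α*k ≤ b k) (hbu : ∀ k, b k ≤ α*k+2)
    (hpos : ∀ n : ℕ, ∀ s : ℝ, l ^ α⁻¹ < s → 0 ≤ SG w b n s)
    {t : ℝ} (ht : 0 < t) :
    0 ≤ ∑' k, w k * t ^ (b k - 1) / Real.Gamma (b k) := by
  have hW0 : 0 ≤ W := le_trans (abs_nonneg (w 0)) (by simpa using hw 0)
  set N : ℕ := ⌈t * l ^ α⁻¹⌉₊ + 2 with hNdef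
  have hN1 : 1 ≤ N := by omega
  have hN0 : (0:ℝ) < N := by rw [hNdef]; positivity
  have hNt : t * l ^ α⁻¹ < (N:ℝ) := by
    calc t * l ^ α⁻¹ ≤ (⌈t * l ^ α⁻¹⌉₊ : ℝ) := Nat.le_ceil _
      _ < (N:ℝ) := by rw [hNdef]; push_cast; linarith
  have hNs : l ^ α⁻¹ < (N:ℝ)/t := by
    rw [lt_div_iff₀ ht]
    calc l ^ α⁻¹ * t = t * l ^ α⁻¹ := by ring
      _ < (N:ℝ) := hNt
  set F : ℕ → ℕ → ℝ := fun n k => w k * xseq n (b k) * t ^ (b k - 1) with hFdef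
  -- pointwise limits
  have h_ab : ∀ k, Tendsto (fun n => F n k) atTop
      (𝓝 (w k * t ^ (b k - 1) / Real.Gamma (b k))) := by
    intro k
    have h1 := (xseq_tendsto (hb0 k)).const_mul (w k * t ^ (b k - 1))
    have h2 : (w k * t ^ (b k - 1)) * (1 / Real.Gamma (b k))
        = w k * t ^ (b k - 1) / Real.Gamma (b k) := by ring
    rw [h2] at h1
    apply h1.congr
    intro n
    simp only [hFdef]; ring
  -- dominating sequence
  set D : ℕ → ℝ := fun k => if b k < 1 then W * l^k * t ^ (b k - 1) * Real.exp 1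
    else W * l^k * t ^ (b k - 1) * xseq N (b k) with hDdef
  have h_bound : ∀ᶠ n : ℕ in atTop, ∀ k, ‖F n k‖ ≤ D k := by
    filter_upwards [eventually_ge_atTop N] with n hn
    intro k
    have hn1 : 1 ≤ n := le_trans hN1 hn
    have htp : (0:ℝ) < t ^ (b k - 1) := Real.rpow_pos_of_pos ht _
    have habs : ‖F n k‖ = |w k| * xseq n (b k) * t ^ (b k - 1) := by
      simp only [hFdef, Real.norm_eq_abs, abs_mul, abs_mul, abs_of_nonneg (xseq_nonneg (hb0 k) n),
        abs_of_pos htp]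
    rw [habs]
    simp only [hDdef]
    by_cases hbk : b k < 1
    · rw [if_pos hbk]
      have hx := xseq_le_exp (hb0 k) hbk.le hn1
      calc |w k| * xseq n (b k) * t ^ (b k - 1)
          ≤ (W * l^k) * Real.exp 1 * t ^ (b k - 1) :=
            mul_le_mul_of_nonneg_right
              (mul_le_mul (hw k) hx (xseq_nonneg (hb0 k) n) (by positivity)) htp.le
        _ = W * l^k * t ^ (b k - 1) * Real.exp 1 := by ring
    · rw [if_neg hbk]
      push_neg at hbk
      have hx := xseq_le_of_ge hbk hN1 hn
      calc |w k| * xseq n (b k) * t ^ (b k - 1)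
          ≤ (W * l^k) * xseq N (b k) * t ^ (b k - 1) :=
            mul_le_mul_of_nonneg_right
              (mul_le_mul (hw k) hx (xseq_nonneg (hb0 k) n) (by positivity)) htp.le
        _ = W * l^k * t ^ (b k - 1) * xseq N (b k) := by ring
  -- D is summable
  have hD : Summable D := by
    set w' : ℕ → ℝ := fun k => W * l ^ k with hw'def
    have hw' : ∀ k, |w' k| ≤ W * l ^ k := by
      intro k
      rw [hw'def, abs_of_nonneg (by positivity)]
    set cN : ℝ := ((N:ℝ)/t) ^ ((N:ℝ)+1) / (Nat.factorial N : ℝ) with hcNdef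
    have hfacN : (0:ℝ) < (Nat.factorial N : ℝ) := by exact_mod_cast N.factorial_pos
    have hcN : 0 < cN := by rw [hcNdef]; positivity
    apply Summable.of_norm_bounded_eventually_nat
      (g := fun k => cN * SGbnd W l α ((N:ℝ)/t) N k)
      ((summable_SGbnd hα1 hl hNs N).mul_left cN)
    have hK : ∀ᶠ k : ℕ in atTop, (1:ℝ) ≤ α * k := by
      have h := (tendsto_natCast_atTop_atTop (R := ℝ)).const_mul_atTop hα1
      exact h.eventually_ge_atTop 1
    filter_upwards [hK] with k hk
    have hbk : ¬ (b k < 1) := not_lt.mpr (le_trans hk (hbl k))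
    have htp : (0:ℝ) < t ^ (b k - 1) := Real.rpow_pos_of_pos ht _
    have hDk : D k = w' k * xseq N (b k) * t ^ (b k - 1) := by
      simp only [hDdef, if_neg hbk, hw'def]; ring
    have hDk2 : D k = cN * SGterm w' b N ((N:ℝ)/t) k := by
      rw [hDk, F_eq_scaled ht w' b hN1 k, hcNdef]
    rw [Real.norm_eq_abs, hDk2, abs_mul, abs_of_pos hcN]
    apply mul_le_mul_of_nonneg_left ?_ hcN.le
    exact SGterm_bound hα1 hα2 hl hw' hb0 hbl hbu
      (lt_of_le_of_lt (Real.rpow_nonneg hl.le _) hNs) le_rfl N k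
  -- eventual nonnegativity of the partial limits
  have hnn : ∀ᶠ n : ℕ in atTop, 0 ≤ ∑' k, F n k := by
    filter_upwards [eventually_ge_atTop N] with n hn
    have hn1 : 1 ≤ n := le_trans hN1 hn
    have hn0 : (0:ℝ) < n := by exact_mod_cast hn1
    have hfacn : (0:ℝ) < (Nat.factorial n : ℝ) := by exact_mod_cast n.factorial_pos
    have hsn : l ^ α⁻¹ < (n:ℝ)/t := by
      apply lt_of_lt_of_le hNs
      gcongr
    have hcn : (0:ℝ) < ((n:ℝ)/t) ^ ((n:ℝ)+1) / (Nat.factorial n : ℝ) := by positivity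
    have heq : ∑' k, F n k
        = (((n:ℝ)/t) ^ ((n:ℝ)+1) / (Nat.factorial n : ℝ)) * SG w b n ((n:ℝ)/t) := by
      rw [SG, ← tsum_mul_left]
      exact tsum_congr (fun k => F_eq_scaled ht w b hn1 k)
    rw [heq]
    exact mul_nonneg hcn.le (hpos n _ hsn)
  exact ge_of_tendsto (tendsto_tsum_of_dominated_convergence hD h_ab h_bound) hnn

lemma SG_nonneg_of_base {α l W : ℝ} {w b : ℕ → ℝ} {L0 : List (ℝ × ℝ × ℕ)}
    (hα1 : 0 < α) (hα2 : α < 1) (hl : 0 < l)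
    (hw : ∀ k, |w k| ≤ W * l ^ k)
    (hb0 : ∀ k, 0 < b k) (hbl : ∀ k, α*k ≤ b k) (hbu : ∀ k, b k ≤ α*k+2)
    (hsok : SOK 0 L0)
    (hbase : ∀ s : ℝ, l ^ α⁻¹ < s → SG w b 0 s = evalR α l L0 s) :
    ∀ n : ℕ, ∀ s : ℝ, l ^ α⁻¹ < s → 0 ≤ SG w b n s := by
  have hlink : ∀ n : ℕ, ∀ s : ℝ, l ^ α⁻¹ < s →
      SG w b n s = (-1:ℝ)^n * evalR α l ((derR α)^[n] L0) s := by
    intro n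
    induction n with
    | zero => intro s hs; simpa using hbase s hs
    | succ n ih =>
        intro s hs
        have hs0 : 0 < s := lt_of_le_of_lt (Real.rpow_nonneg hl.le _) hs
        have hD1 := SG_hasDerivAt hα1 hα2 hl hw hb0 hbl hbu hs n
        have hD2 := (evalR_hasDerivAt hα1 hl hs0 ((derR α)^[n] L0)).const_mul ((-1:ℝ)^n)
        have heq : SG w b n =ᶠ[𝓝 s] (fun z => (-1:ℝ)^n * evalR α l ((derR α)^[n] L0) z) := by
          filter_upwards [Ioi_mem_nhds hs] with z hz
          exact ih z hz
        have hD2' : HasDerivAt (SG w b n)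
            ((-1:ℝ)^n * evalR α l (derR α ((derR α)^[n] L0)) s) s :=
          hD2.congr_of_eventuallyEq heq
        have huniq := hD1.unique hD2'
        rw [Function.iterate_succ_apply', pow_succ]
        linarith [huniq]
  intro n s hs
  have hs0 : 0 < s := lt_of_le_of_lt (Real.rpow_nonneg hl.le _) hs
  rw [hlink n s hs]
  exact SOK_eval hl (SOK_iter hα1 hα2 hsok n) hs0

/-- base case for the ψ-series. -/
lemma base_psi {α l : ℝ} (hα1 : 0 < α) (hα2 : α < 1) (hl : 0 < l) :
    ∀ s : ℝ, l ^ α⁻¹ < s →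
      SG (fun k => (-l)^k) (fun k => α*k+1) 0 s = evalR α l [(1, α-1, 1)] s := by
  intro s hs
  have hs0 : 0 < s := lt_of_le_of_lt (Real.rpow_nonneg hl.le _) hs
  have hr : ‖(-l) * s^(-α)‖ < 1 := by
    rw [Real.norm_eq_abs, abs_mul, abs_neg, abs_of_pos hl,
      abs_of_pos (Real.rpow_pos_of_pos hs0 _)]
    exact geom_ratio_lt_one hα1 hl hs
  have hterm : ∀ k : ℕ, SGterm (fun k => (-l)^k) (fun k => α*k+1) 0 s k
      = ((-l) * s^(-α))^k * s^(-(1:ℝ)) := by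
    intro k
    rw [SGterm]
    simp only [Finset.range_zero, Finset.prod_empty, mul_one, Nat.cast_zero, add_zero]
    have e1 : -(α*(k:ℝ)+1) = (-α)*(k:ℝ) + (-1) := by ring
    rw [e1, Real.rpow_add hs0, mul_pow, ← Real.rpow_natCast (s ^ (-α)) k,
      ← Real.rpow_mul hs0.le]
    ring_nf
  rw [SG, tsum_congr hterm, tsum_mul_right, tsum_geometric_of_norm_lt_one hr]
  have hbpos : (0:ℝ) < s^α + l := by positivity
  have h1l : (0:ℝ) < 1 + l * s^(-α) := by positivity
  have hsid : s^(-α) * s^α = 1 := by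
    rw [← Real.rpow_add hs0]; norm_num
  have hid : (1 + l * s^(-α)) * s^α = s^α + l := by nlinarith [hsid]
  have heval : evalR α l [(1, α-1, 1)] s = s^(α-1) * (s^α + l)⁻¹ := by
    simp [evalR, evalT, Real.rpow_neg_one]
  rw [heval]
  have e2 : s^(α-1) = s^α * s^(-(1:ℝ)) := by
    rw [← Real.rpow_add hs0]; ring_nf
  rw [e2, show (1:ℝ) - (-l) * s^(-α) = 1 + l * s^(-α) by ring]
  calc (1 + l*s^(-α))⁻¹ * s^(-(1:ℝ))
      = (1 + l*s^(-α))⁻¹ * s^(-(1:ℝ)) * ((s^α+l) * (s^α+l)⁻¹) := by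
        rw [mul_inv_cancel₀ hbpos.ne']; ring
    _ = ((1 + l*s^(-α))⁻¹ * (1 + l*s^(-α))) * s^α * s^(-(1:ℝ)) * (s^α+l)⁻¹ := by
        rw [← hid]; ring
    _ = s^α * s^(-(1:ℝ)) * (s^α+l)⁻¹ := by
        rw [inv_mul_cancel₀ h1l.ne']; ring

/-- base case for the ρ-series. -/
lemma base_rho {α l : ℝ} (hα1 : 0 < α) (hα2 : α < 1) (hl : 0 < l) :
    ∀ s : ℝ, l ^ α⁻¹ < s →
      SG (fun k => l * (-l)^k) (fun k => α*((k:ℝ)+1)) 0 s = evalR α l [(l, 0, 1)] s := by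
  intro s hs
  have hs0 : 0 < s := lt_of_le_of_lt (Real.rpow_nonneg hl.le _) hs
  have hr : ‖(-l) * s^(-α)‖ < 1 := by
    rw [Real.norm_eq_abs, abs_mul, abs_neg, abs_of_pos hl,
      abs_of_pos (Real.rpow_pos_of_pos hs0 _)]
    exact geom_ratio_lt_one hα1 hl hs
  have hterm : ∀ k : ℕ, SGterm (fun k => l * (-l)^k) (fun k => α*((k:ℝ)+1)) 0 s k
      = ((-l) * s^(-α))^k * (l * s^(-α)) := by
    intro k
    rw [SGterm]
    simp only [Finset.range_zero, Finset.prod_empty, mul_one, Nat.cast_zero, add_zero]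
    have e1 : -(α*((k:ℝ)+1)) = (-α)*(k:ℝ) + (-α) := by ring
    rw [e1, Real.rpow_add hs0, mul_pow, ← Real.rpow_natCast (s ^ (-α)) k,
      ← Real.rpow_mul hs0.le]
    ring_nf
  rw [SG, tsum_congr hterm, tsum_mul_right, tsum_geometric_of_norm_lt_one hr]
  have hbpos : (0:ℝ) < s^α + l := by positivity
  have h1l : (0:ℝ) < 1 + l * s^(-α) := by positivity
  have hsid : s^(-α) * s^α = 1 := by
    rw [← Real.rpow_add hs0]; norm_num
  have hid : (1 + l * s^(-α)) * s^α = s^α + l := by nlinarith [hsid]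
  have heval : evalR α l [(l, 0, 1)] s = l * (s^α + l)⁻¹ := by
    simp [evalR, evalT, Real.rpow_neg_one, Real.rpow_zero]
  rw [heval, show (1:ℝ) - (-l) * s^(-α) = 1 + l * s^(-α) by ring]
  calc (1 + l*s^(-α))⁻¹ * (l * s^(-α))
      = (1 + l*s^(-α))⁻¹ * (l * s^(-α)) * ((1 + l*s^(-α)) * s^α * (s^α+l)⁻¹) := by
        rw [hid, mul_inv_cancel₀ hbpos.ne']; ring
    _ = ((1 + l*s^(-α))⁻¹ * (1 + l*s^(-α))) * (s^(-α) * s^α) * l * (s^α+l)⁻¹ := by ring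
    _ = l * (s^α + l)⁻¹ := by
        rw [inv_mul_cancel₀ h1l.ne', hsid]; ring

noncomputable def psi (l α t : ℝ) : ℝ := ∑' k : ℕ, (-l)^k * t^(α*k) / Real.Gamma (α*k+1)

noncomputable def rho (l α t : ℝ) : ℝ :=
  ∑' k : ℕ, l * (-l)^k * t^(α*((k:ℝ)+1)-1) / Real.Gamma (α*((k:ℝ)+1))

lemma psi_w_abs {l : ℝ} (hl : 0 < l) : ∀ k : ℕ, |(-l)^k| ≤ 1 * l ^ k := by
  intro k
  rw [abs_pow, abs_neg, abs_of_pos hl, one_mul]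

lemma psi_nonneg {α l : ℝ} (hα1 : 0 < α) (hα2 : α < 1) (hl : 0 < l)
    {t : ℝ} (ht : 0 ≤ t) : 0 ≤ psi l α t := by
  rcases eq_or_lt_of_le ht with rfl | ht0
  · rw [psi]
    rw [tsum_eq_single 0 ?_]
    · norm_num [Real.Gamma_one]
    · intro k hk
      have : (0:ℝ) ^ (α*(k:ℝ)) = 0 := by
        apply Real.zero_rpow
        have : (0:ℝ) < (k:ℝ) := by exact_mod_cast Nat.pos_of_ne_zero hk
        positivity
      rw [this]
      simp
  · have hb0 : ∀ k : ℕ, (0:ℝ) < α*(k:ℝ)+1 := fun k => by positivity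
    have hbl : ∀ k : ℕ, α*(k:ℝ) ≤ α*(k:ℝ)+1 := fun k => by linarith
    have hbu : ∀ k : ℕ, α*(k:ℝ)+1 ≤ α*(k:ℝ)+2 := fun k => by linarith
    have hsok : SOK 0 [((1:ℝ), α-1, (1:ℕ))] := by
      intro P hP
      simp only [List.mem_singleton] at hP
      subst hP
      constructor
      · norm_num
      · show α - 1 ≤ 0; linarith
    have hpos := SG_nonneg_of_base hα1 hα2 hl (psi_w_abs hl) hb0 hbl hbu hsok
      (base_psi hα1 hα2 hl)
    have h := tsum_PW_nonneg hα1 hα2 hl (psi_w_abs hl) hb0 hbl hbu hpos ht0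
    have heq : psi l α t = ∑' k : ℕ, (-l)^k * t ^ ((α*(k:ℝ)+1) - 1) / Real.Gamma (α*(k:ℝ)+1) := by
      rw [psi]
      apply tsum_congr
      intro k
      rw [show α*(k:ℝ)+1-1 = α*(k:ℝ) by ring]
    rw [heq]
    exact h

lemma rho_w_abs {l : ℝ} (hl : 0 < l) : ∀ k : ℕ, |l * (-l)^k| ≤ l * l ^ k := by
  intro k
  rw [abs_mul, abs_pow, abs_neg, abs_of_pos hl]

lemma rho_nonneg {α l : ℝ} (hα1 : 0 < α) (hα2 : α < 1) (hl : 0 < l)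
    {t : ℝ} (ht : 0 < t) : 0 ≤ rho l α t := by
  have hb0 : ∀ k : ℕ, (0:ℝ) < α*((k:ℝ)+1) := fun k => by positivity
  have hbl : ∀ k : ℕ, α*(k:ℝ) ≤ α*((k:ℝ)+1) := fun k => by nlinarith [hα1.le]
  have hbu : ∀ k : ℕ, α*((k:ℝ)+1) ≤ α*(k:ℝ)+2 := fun k => by nlinarith
  have hsok : SOK 0 [((l:ℝ), (0:ℝ), (1:ℕ))] := by
    intro P hP
    simp only [List.mem_singleton] at hP
    subst hP
    exact ⟨by simpa using hl.le, le_refl 0⟩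
  have hpos := SG_nonneg_of_base hα1 hα2 hl (rho_w_abs hl) hb0 hbl hbu hsok
    (base_rho hα1 hα2 hl)
  have h := tsum_PW_nonneg hα1 hα2 hl (rho_w_abs hl) hb0 hbl hbu hpos ht
  rw [rho]
  exact h

lemma summable_xgamma {α : ℝ} (hα1 : 0 < α) (hα2 : α < 1) {x : ℝ} (hx : 0 ≤ x)
    {γ : ℝ} (hγ : 0 < γ) : Summable (fun k : ℕ => x^k / Real.Gamma (α*k+γ)) := by
  rcases eq_or_lt_of_le hx with rfl | hx0
  · apply summable_of_ne_finset_zero (s := {0})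
    intro k hk
    simp only [Finset.mem_singleton] at hk
    rw [zero_pow hk, zero_div]
  · have h := summable_master hα1 hα2 γ hγ hx0 0
    apply h.congr
    intro k
    rw [pow_zero, one_mul]

lemma psi_term_eq {l T : ℝ} (hl : 0 ≤ l) (hT : 0 ≤ T) (α : ℝ) (k : ℕ) :
    (l * T^α)^k = l^k * T^(α*k) := by
  rw [mul_pow, ← Real.rpow_natCast (T^α) k, ← Real.rpow_mul hT]

lemma summable_psi_terms {α l : ℝ} (hα1 : 0 < α) (hα2 : α < 1) (hl : 0 < l)
    {t : ℝ} (ht : 0 ≤ t) :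
    Summable (fun k : ℕ => (-l)^k * t^(α*k) / Real.Gamma (α*k+1)) := by
  apply Summable.of_norm_bounded (summable_xgamma hα1 hα2
    (show (0:ℝ) ≤ l * t^α by positivity) one_pos)
  intro k
  have hΓ : 0 < Real.Gamma (α*k+1) := Real.Gamma_pos_of_pos (by positivity)
  rw [Real.norm_eq_abs, abs_div, abs_of_pos hΓ, abs_mul, abs_pow, abs_neg, abs_of_pos hl,
    abs_of_nonneg (Real.rpow_nonneg ht _), psi_term_eq hl.le ht α k]

noncomputable def psiC (l α T : ℝ) : ℝ := ∑' k : ℕ, (l*T^α)^k / Real.Gamma (α*k+1)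

noncomputable def rhoC (l α T : ℝ) : ℝ := l * ∑' k : ℕ, (l*T^α)^k / Real.Gamma (α*k+α)

lemma psi_abs_le {α l : ℝ} (hα1 : 0 < α) (hα2 : α < 1) (hl : 0 < l)
    {x T : ℝ} (hx : 0 ≤ x) (hxT : x ≤ T) : |psi l α x| ≤ psiC l α T := by
  have hT : (0:ℝ) ≤ T := le_trans hx hxT
  have hsum2 : Summable (fun k : ℕ => (l*T^α)^k / Real.Gamma (α*k+1)) :=
    summable_xgamma hα1 hα2 (by positivity) one_pos
  have hnorm : ∀ k : ℕ, ‖(-l)^k * x^(α*k) / Real.Gamma (α*k+1)‖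
      ≤ (l*T^α)^k / Real.Gamma (α*k+1) := by
    intro k
    have hΓ : 0 < Real.Gamma (α*k+1) := Real.Gamma_pos_of_pos (by positivity)
    rw [Real.norm_eq_abs, abs_div, abs_of_pos hΓ, abs_mul, abs_pow, abs_neg, abs_of_pos hl,
      abs_of_nonneg (Real.rpow_nonneg hx _), psi_term_eq hl.le hT α k]
    have h2 : l^k * x^(α*k) ≤ l^k * T^(α*k) :=
      mul_le_mul_of_nonneg_left (Real.rpow_le_rpow hx hxT (by positivity)) (by positivity)
    exact (div_le_div_iff_of_pos_right hΓ).mpr h2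
  have hsumnorm : Summable (fun k : ℕ => ‖(-l)^k * x^(α*k) / Real.Gamma (α*k+1)‖) :=
    hsum2.of_nonneg_of_le (fun k => norm_nonneg _) hnorm
  calc |psi l α x| ≤ ∑' k : ℕ, ‖(-l)^k * x^(α*k) / Real.Gamma (α*k+1)‖ := by
        rw [psi]
        exact norm_tsum_le_tsum_norm hsumnorm
    _ ≤ ∑' k : ℕ, (l*T^α)^k / Real.Gamma (α*k+1) := Summable.tsum_le_tsum hnorm hsumnorm hsum2
    _ = psiC l α T := rfl

lemma rho_abs_le {α l : ℝ} (hα1 : 0 < α) (hα2 : α < 1) (hl : 0 < l)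
    {x T : ℝ} (hx : 0 < x) (hxT : x ≤ T) : |rho l α x| ≤ rhoC l α T * x^(α-1) := by
  have hT : (0:ℝ) < T := lt_of_lt_of_le hx hxT
  have hsum2 : Summable (fun k : ℕ => (l*T^α)^k / Real.Gamma (α*k+α)) :=
    summable_xgamma hα1 hα2 (by positivity) hα1
  have hxp : (0:ℝ) < x^(α-1) := Real.rpow_pos_of_pos hx _
  have key : ∀ k : ℕ, ‖l * (-l)^k * x^(α*((k:ℝ)+1)-1) / Real.Gamma (α*((k:ℝ)+1))‖
      ≤ (l * ((l*T^α)^k / Real.Gamma (α*k+α))) * x^(α-1) := by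
    intro k
    have hb : (0:ℝ) < α*((k:ℝ)+1) := by positivity
    have hΓ : 0 < Real.Gamma (α*((k:ℝ)+1)) := Real.Gamma_pos_of_pos hb
    have hΓeq : α*((k:ℝ)+1) = α*(k:ℝ)+α := by ring
    have hexp : x^(α*((k:ℝ)+1)-1) = x^(α-1) * x^(α*(k:ℝ)) := by
      rw [← Real.rpow_add hx]; ring_nf
    rw [Real.norm_eq_abs, abs_div, abs_of_pos hΓ, abs_mul, abs_mul, abs_pow, abs_neg,
      abs_of_pos hl, abs_of_nonneg (Real.rpow_nonneg hx.le _), hexp, hΓeq]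
    have hxT' : x^(α*(k:ℝ)) ≤ T^(α*(k:ℝ)) := Real.rpow_le_rpow hx.le hxT (by positivity)
    have hΓ' : 0 < Real.Gamma (α*(k:ℝ)+α) := Real.Gamma_pos_of_pos (by positivity)
    rw [psi_term_eq hl.le hT.le α k]
    have h2 : l * l^k * (x^(α-1) * x^(α*(k:ℝ))) / Real.Gamma (α*(k:ℝ)+α)
        ≤ l * l^k * (x^(α-1) * T^(α*(k:ℝ))) / Real.Gamma (α*(k:ℝ)+α) := by
      apply (div_le_div_iff_of_pos_right hΓ').mpr
      exact mul_le_mul_of_nonneg_left (mul_le_mul_of_nonneg_left hxT' hxp.le) (by positivity)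
    rw [show l * (l^k * T^(α*(k:ℝ)) / Real.Gamma (α*(k:ℝ)+α)) * x^(α-1)
        = l * l^k * (x^(α-1) * T^(α*(k:ℝ))) / Real.Gamma (α*(k:ℝ)+α) by ring]
    exact h2
  have hsumnorm : Summable (fun k : ℕ =>
      (l * ((l*T^α)^k / Real.Gamma (α*k+α))) * x^(α-1)) :=
    ((hsum2.mul_left l).mul_right _)
  calc |rho l α x| ≤ ∑' k : ℕ, ‖l * (-l)^k * x^(α*((k:ℝ)+1)-1) / Real.Gamma (α*((k:ℝ)+1))‖ := by
        rw [rho, ← Real.norm_eq_abs]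
        apply norm_tsum_le_tsum_norm
        apply hsumnorm.of_nonneg_of_le (fun k => norm_nonneg _) key
    _ ≤ ∑' k : ℕ, (l * ((l*T^α)^k / Real.Gamma (α*k+α))) * x^(α-1) :=
        Summable.tsum_le_tsum key (hsumnorm.of_nonneg_of_le (fun k => norm_nonneg _) key) hsumnorm
    _ = rhoC l α T * x^(α-1) := by
        rw [rhoC, tsum_mul_right, tsum_mul_left]

lemma psi_hasDerivAt {α l : ℝ} (hα1 : 0 < α) (hα2 : α < 1) (hl : 0 < l)
    {t : ℝ} (ht : 0 < t) : HasDerivAt (psi l α) (-(rho l α t)) t := by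
  set g' : ℕ → ℝ → ℝ := fun k y => (-l)^k * (α*k * y^(α*k-1)) / Real.Gamma (α*k+1) with hg'def
  set u : ℕ → ℝ := fun k => (2*α/t) * ((k:ℝ)+1) * (l*(t+1)^α)^k / Real.Gamma (α*k+1) with hudef
  have hu : Summable u := by
    have h := (summable_master hα1 hα2 1 one_pos
      (x := l*(t+1)^α) (by positivity) 1).mul_left (2*α/t)
    apply h.congr
    intro k
    rw [hudef]
    ring_nf
  have hbound : ∀ k : ℕ, ∀ y ∈ Ioo (t/2) (t+1), ‖g' k y‖ ≤ u k := by
    intro k y hy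
    have hy0 : (0:ℝ) < y := lt_trans (by positivity) hy.1
    have hΓ : 0 < Real.Gamma (α*k+1) := Real.Gamma_pos_of_pos (by positivity)
    have hyk : y^(α*k-1) = y^(α*k) * y⁻¹ := by
      rw [show α*(k:ℝ)-1 = α*k + (-1) by ring, Real.rpow_add hy0, Real.rpow_neg_one]
    have h1 : y^(α*(k:ℝ)) ≤ (t+1)^(α*(k:ℝ)) :=
      Real.rpow_le_rpow hy0.le hy.2.le (by positivity)
    have h2 : y⁻¹ ≤ 2/t := by
      have e : (2:ℝ)/t = (t/2)⁻¹ := by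
        field_simp
      rw [e]
      exact inv_anti₀ (by positivity) hy.1.le
    have hnorm : ‖g' k y‖ = l^k * (α*k * (y^(α*k) * y⁻¹)) / Real.Gamma (α*k+1) := by
      rw [hg'def]
      simp only
      rw [Real.norm_eq_abs, abs_div, abs_of_pos hΓ, abs_mul, abs_mul, abs_pow, abs_neg,
        abs_of_pos hl, abs_of_nonneg (by positivity : (0:ℝ) ≤ α*k), ← hyk,
        abs_of_nonneg (Real.rpow_nonneg hy0.le _), hyk]
    rw [hnorm, hudef]
    simp only
    rw [psi_term_eq hl.le (by positivity) α k]
    apply (div_le_div_iff_of_pos_right hΓ).mpr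
    calc l^k * (α*k * (y^(α*k) * y⁻¹))
        ≤ l^k * ((α*((k:ℝ)+1)) * ((t+1)^(α*k) * (2/t))) := by
          apply mul_le_mul_of_nonneg_left ?_ (by positivity)
          apply mul_le_mul
          · nlinarith [hα1.le, Nat.cast_nonneg (α := ℝ) k]
          · exact mul_le_mul h1 h2 (by positivity) (by positivity)
          · positivity
          · positivity
      _ = 2*α/t * ((k:ℝ)+1) * (l^k * (t+1)^(α*k)) := by ring
  have hderiv : ∀ k : ℕ, ∀ y ∈ Ioo (t/2) (t+1),
      HasDerivAt (fun z => (-l)^k * z^(α*(k:ℝ)) / Real.Gamma (α*k+1)) (g' k y) y := by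
    intro k y hy
    have hy0 : (0:ℝ) < y := lt_trans (by positivity) hy.1
    have h := ((Real.hasDerivAt_rpow_const (x := y) (p := α*k)
      (Or.inl hy0.ne')).const_mul ((-l)^k)).div_const (Real.Gamma (α*k+1))
    exact h
  have hsum0 : Summable (fun k : ℕ => (-l)^k * t^(α*(k:ℝ)) / Real.Gamma (α*k+1)) :=
    summable_psi_terms hα1 hα2 hl ht.le
  have hmem : t ∈ Ioo (t/2) (t+1) := ⟨by linarith, by linarith⟩
  have main : HasDerivAt (fun y => ∑' k : ℕ, (-l)^k * y^(α*(k:ℝ)) / Real.Gamma (α*k+1))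
      (∑' k : ℕ, g' k t) t :=
    hasDerivAt_tsum_of_isPreconnected hu isOpen_Ioo isPreconnected_Ioo
      hderiv hbound hmem hsum0 hmem
  have hsum' : Summable (fun k : ℕ => g' k t) := by
    apply Summable.of_norm_bounded hu
    intro k
    exact hbound k t hmem
  have hval : ∑' k : ℕ, g' k t = -(rho l α t) := by
    rw [Summable.tsum_eq_zero_add hsum']
    have h0 : g' 0 t = 0 := by
      rw [hg'def]
      norm_num
    rw [h0, zero_add, rho, ← tsum_neg]
    apply tsum_congr
    intro k
    have hb : (0:ℝ) < α*((k:ℝ)+1) := by positivity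
    rw [hg'def]
    simp only
    push_cast
    rw [show α*((k:ℝ)+1)+1 = (α*((k:ℝ)+1))+1 by ring, Real.Gamma_add_one hb.ne']
    rw [pow_succ]
    have hΓ : Real.Gamma (α*((k:ℝ)+1)) ≠ 0 := (Real.Gamma_pos_of_pos hb).ne'
    field_simp
  rw [← hval]
  exact main


lemma mlE_eq_psi {α l u : ℝ} (hu : 0 ≤ u) : mlE α (-l * u^α) = psi l α u := by
  rw [mlE, psi]
  apply tsum_congr
  intro k
  rw [show (-l * u^α)^k = (-l)^k * u^(α*k) by
    rw [mul_pow, ← Real.rpow_natCast (u^α) k, ← Real.rpow_mul hu], mul_div_assoc]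

end ABCW

open ABCW Filter Topology

/-- ABC derivative at a minimum point is bounded above. -/
theorem abc_deriv_at_min (a b α Bα : ℝ) (hab : a < b) (hα1 : 0 < α) (hα2 : α < 1)
    (hB : 0 < Bα) (f : ℝ → ℝ) (hf : MemH1 a b f)
    (t0 : ℝ) (ht0 : t0 ∈ Set.Icc a b) (hmin : ∀ t ∈ Set.Icc a b, f t0 ≤ f t) :
    abc Bα α a f t0 ≤ Bα / (1 - α) * mlE α (-(α / (1 - α)) * (t0 - a) ^ α) * (f t0 - f a) ∧
      Bα / (1 - α) * mlE α (-(α / (1 - α)) * (t0 - a) ^ α) * (f t0 - f a) ≤ 0 := by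
  set l : ℝ := α / (1 - α) with hldef
  have h1α : (0:ℝ) < 1 - α := by linarith
  have hl : 0 < l := div_pos hα1 h1α
  have hc : 0 < Bα / (1 - α) := div_pos hB h1α
  obtain ⟨hat0, ht0b⟩ := ht0
  obtain ⟨hfc, hfd, hfi⟩ := hf
  have hft0a : f t0 ≤ f a := hmin a ⟨le_rfl, hab.le⟩
  -- kernel rewrite
  have hml : mlE α (-(α / (1 - α)) * (t0 - a) ^ α) = psi l α (t0 - a) :=
    mlE_eq_psi (by linarith)
  rcases eq_or_lt_of_le hat0 with rfl | hat0'
  · have hz : f a - f a = 0 := sub_self _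
    rw [abc, intervalIntegral.integral_same, hz, mul_zero, mul_zero]
    exact ⟨le_rfl, le_rfl⟩
  -- a < t0
  have hψnn : 0 ≤ psi l α (t0 - a) := psi_nonneg hα1 hα2 hl (by linarith)
  refine ⟨?_, by nlinarith [hml ▸ (mul_nonneg hc.le hψnn)]⟩
  -- deriv f integrable
  have hderiv_int : IntegrableOn (deriv f) (Set.Ioo a b) := by
    apply Integrable.mono' (g := fun s => 1 + (deriv f s)^2)
    · exact (integrableOn_const measure_Ioo_lt_top.ne).add hfi
    · exact (measurable_deriv f).aestronglyMeasurable.restrict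
    · refine ae_of_all _ fun s => ?_
      rw [Real.norm_eq_abs]
      nlinarith [abs_nonneg (deriv f s), sq_abs (deriv f s), sq_nonneg (|deriv f s| - 1)]
  have hfd_int : IntegrableOn (deriv f) (Set.Ioo a t0) :=
    hderiv_int.mono_set (Set.Ioo_subset_Ioo le_rfl ht0b)
  have hfd_int_ii : ∀ x ∈ Set.Ico a t0, IntervalIntegrable (deriv f) volume x t0 := by
    intro x hx
    rw [intervalIntegrable_iff_integrableOn_Ioc_of_le hx.2.le,
      integrableOn_Ioc_iff_integrableOn_Ioo]
    exact hderiv_int.mono_set (Set.Ioo_subset_Ioo hx.1 ht0b)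
  -- FTC for f
  have hFTCf : ∀ x ∈ Set.Ico a t0, ∫ s in x..t0, deriv f s = f t0 - f x := by
    intro x hx
    apply intervalIntegral.integral_eq_sub_of_hasDeriv_right_of_le hx.2.le
    · exact hfc.mono (Set.Icc_subset_Icc hx.1 ht0b)
    · intro s hs
      have hs' : s ∈ Set.Ioo a b := ⟨lt_of_le_of_lt hx.1 hs.1, lt_of_lt_of_le hs.2 ht0b⟩
      exact ((hfd.differentiableAt (isOpen_Ioo.mem_nhds hs')).hasDerivAt).hasDerivWithinAt
    · exact hfd_int_ii x hx
  -- the kernel derivative function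
  set P : ℝ → ℝ := fun u => if u < t0 then -(deriv (psi l α) (t0 - u)) else 0 with hPdef
  have hPmeas : Measurable P := by
    apply Measurable.ite measurableSet_Iio ?_ measurable_const
    exact ((measurable_deriv (psi l α)).comp (measurable_const.sub measurable_id)).neg
  have hPeq : ∀ u : ℝ, u < t0 → P u = rho l α (t0 - u) := by
    intro u hu
    rw [hPdef]
    simp only [if_pos hu]
    rw [(psi_hasDerivAt hα1 hα2 hl (show 0 < t0 - u by linarith)).deriv, neg_neg]
  have hPnn : ∀ u : ℝ, 0 ≤ P u := by
    intro u
    rw [hPdef]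
    by_cases hu : u < t0
    · simp only [if_pos hu]
      rw [(psi_hasDerivAt hα1 hα2 hl (show 0 < t0 - u by linarith)).deriv, neg_neg]
      exact rho_nonneg hα1 hα2 hl (by linarith)
    · simp [if_neg hu]
  -- P is integrable on (a, t0)
  have hPint : IntegrableOn P (Set.Ioo a t0) := by
    apply Integrable.mono' (g := fun u => rhoC l α (t0-a) * (t0-u)^(α-1))
    · have h1 : IntervalIntegrable (fun x : ℝ => x ^ (α-1)) volume (t0 - a) (t0 - t0) :=
        intervalIntegral.intervalIntegrable_rpow' (by linarith)
      have h2 := h1.comp_sub_left t0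
      rw [show t0 - (t0 - a) = a by ring, show t0 - (t0 - t0) = t0 by ring] at h2
      rw [intervalIntegrable_iff_integrableOn_Ioc_of_le hat0,
        integrableOn_Ioc_iff_integrableOn_Ioo] at h2
      exact h2.const_mul _
    · exact hPmeas.aestronglyMeasurable.restrict
    · rw [ae_restrict_iff' measurableSet_Ioo]
      refine ae_of_all _ fun u hu => ?_
      rw [Real.norm_eq_abs, abs_of_nonneg (hPnn u), hPeq u hu.2]
      calc rho l α (t0 - u) ≤ |rho l α (t0 - u)| := le_abs_self _
        _ ≤ rhoC l α (t0-a) * (t0-u)^(α-1) :=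
            rho_abs_le hα1 hα2 hl (by linarith [hu.2]) (by linarith [hu.1])
  have hPii : IntervalIntegrable P volume a t0 := by
    rw [intervalIntegrable_iff_integrableOn_Ioc_of_le hat0,
      integrableOn_Ioc_iff_integrableOn_Ioo]
    exact hPint
  -- derivative of s ↦ psi (t0 - s)
  have hKd : ∀ u : ℝ, u < t0 → HasDerivAt (fun z => psi l α (t0 - z)) (P u) u := by
    intro u hu
    have h1 := psi_hasDerivAt hα1 hα2 hl (show 0 < t0 - u by linarith)
    have h2 : HasDerivAt (fun z : ℝ => t0 - z) (-1) u := (hasDerivAt_id u).const_sub t0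
    have h3 : HasDerivAt (fun z => psi l α (t0 - z)) _ u := h1.comp u h2
    rw [hPeq u hu]
    convert h3 using 1
    ring
  -- primitive G
  set G : ℝ → ℝ := fun s => ∫ u in a..s, P u with hGdef
  have hGcont : ContinuousOn G (Set.Icc a t0) := by
    have := intervalIntegral.continuousOn_primitive_interval' hPii
      Set.left_mem_uIcc
    rwa [Set.uIcc_of_le hat0] at this
  have hGbd : ∀ s ∈ Set.Ioo a t0, |G s| ≤ ∫ u in Set.Ioc a t0, |P u| := by
    intro s hs
    rw [hGdef]
    simp only
    rw [intervalIntegral.integral_of_le hs.1.le]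
    calc |∫ u in Set.Ioc a s, P u| ≤ ∫ u in Set.Ioc a s, |P u| := by
          exact norm_integral_le_integral_norm P
      _ ≤ ∫ u in Set.Ioc a t0, |P u| := by
          apply setIntegral_mono_set
          · exact ((integrableOn_Ioc_iff_integrableOn_Ioo).2 hPint).norm
          · exact ae_of_all _ fun u => abs_nonneg _
          · exact HasSubset.Subset.eventuallyLE (Set.Ioc_subset_Ioc le_rfl hs.2.le)
  -- FTC for psi (t0 - ·)
  have hKftc : ∀ s ∈ Set.Ioo a t0, psi l α (t0 - s) = psi l α (t0 - a) + G s := by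
    intro s hs
    have h := intervalIntegral.integral_eq_sub_of_hasDerivAt
      (f := fun z => psi l α (t0 - z)) (f' := P) (a := a) (b := s) ?_ ?_
    · rw [hGdef]; simp only; rw [h]; ring
    · intro u hu
      rw [Set.uIcc_of_le hs.1.le] at hu
      exact hKd u (lt_of_le_of_lt hu.2 hs.2)
    · apply hPii.mono_set
      rw [Set.uIcc_of_le hs.1.le, Set.uIcc_of_le hat0]
      exact Set.Icc_subset_Icc le_rfl hs.2.le
  -- rewrite abc
  have habc : abc Bα α a f t0
      = (Bα/(1-α)) * ∫ s in Set.Ioo a t0, psi l α (t0 - s) * deriv f s := by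
    rw [abc, intervalIntegral.integral_of_le hat0, integral_Ioc_eq_integral_Ioo]
    congr 1
    apply setIntegral_congr_fun measurableSet_Ioo
    intro s hs
    simp only
    rw [mlE_eq_psi (show (0:ℝ) ≤ t0 - s by linarith [hs.2])]
  -- integrability of the pieces
  have hKint : IntegrableOn (fun s => psi l α (t0 - s) * deriv f s) (Set.Ioo a t0) := by
    apply Integrable.mono' (g := fun s => psiC l α (t0 - a) * |deriv f s|)
    · exact (hfd_int.norm.const_mul _)
    · apply AEStronglyMeasurable.mul ?_ ((measurable_deriv f).aestronglyMeasurable.restrict)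
      apply ContinuousOn.aestronglyMeasurable ?_ measurableSet_Ioo
      intro s hs
      have h1 := (psi_hasDerivAt hα1 hα2 hl (show 0 < t0 - s by linarith [hs.2])).continuousAt
      have h2 : ContinuousAt (fun z : ℝ => t0 - z) s := (continuous_const.sub continuous_id).continuousAt
      exact (h1.comp h2).continuousWithinAt
    · rw [ae_restrict_iff' measurableSet_Ioo]
      refine ae_of_all _ fun s hs => ?_
      rw [Real.norm_eq_abs, abs_mul]
      apply mul_le_mul_of_nonneg_right ?_ (abs_nonneg _)
      exact psi_abs_le hα1 hα2 hl (by linarith [hs.2]) (by linarith [hs.1])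
  have hGf_int : IntegrableOn (fun s => G s * deriv f s) (Set.Ioo a t0) := by
    apply Integrable.mono' (g := fun s => (∫ u in Set.Ioc a t0, |P u|) * |deriv f s|)
    · exact (hfd_int.norm.const_mul _)
    · exact ((hGcont.mono Set.Ioo_subset_Icc_self).aestronglyMeasurable measurableSet_Ioo).mul
        ((measurable_deriv f).aestronglyMeasurable.restrict)
    · rw [ae_restrict_iff' measurableSet_Ioo]
      refine ae_of_all _ fun s hs => ?_
      rw [Real.norm_eq_abs, abs_mul]
      exact mul_le_mul_of_nonneg_right (hGbd s hs) (abs_nonneg _)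
  have hKa_int : IntegrableOn (fun s => psi l α (t0 - a) * deriv f s) (Set.Ioo a t0) :=
    hfd_int.const_mul _
  -- split the integral
  have hsplit : ∫ s in Set.Ioo a t0, psi l α (t0 - s) * deriv f s
      = psi l α (t0 - a) * (f t0 - f a) + ∫ s in Set.Ioo a t0, G s * deriv f s := by
    have h1 : ∫ s in Set.Ioo a t0, psi l α (t0 - s) * deriv f s
        = ∫ s in Set.Ioo a t0, (psi l α (t0 - a) * deriv f s + G s * deriv f s) := by
      apply setIntegral_congr_fun measurableSet_Ioo
      intro s hs
      simp only
      rw [hKftc s hs]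
      ring
    rw [h1, integral_add hKa_int hGf_int, integral_const_mul]
    congr 2
    have := hFTCf a ⟨le_rfl, hat0'⟩
    rw [intervalIntegral.integral_of_le hat0, integral_Ioc_eq_integral_Ioo] at this
    rw [this]
  -- Fubini step
  have hfub : ∫ s in Set.Ioo a t0, G s * deriv f s
      = ∫ u in Set.Ioo a t0, P u * (f t0 - f u) := by
    set μ := volume.restrict (Set.Ioo a t0) with hμ
    set H : ℝ → ℝ → ℝ := fun s u => (if u < s then (1:ℝ) else 0) * (P u * deriv f s) with hHdef
    have hHint : Integrable (Function.uncurry H) (μ.prod μ) := by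
      apply Integrable.mono' (g := fun z : ℝ×ℝ => |deriv f z.1 * P z.2|)
      · exact (Integrable.mul_prod hfd_int hPint).norm
      · apply Measurable.aestronglyMeasurable
        apply Measurable.mul
        · exact Measurable.ite (measurableSet_lt measurable_snd measurable_fst)
            measurable_const measurable_const
        · exact (hPmeas.comp measurable_snd).mul ((measurable_deriv f).comp measurable_fst)
      · refine ae_of_all _ fun z => ?_
        rw [Function.uncurry, hHdef]
        simp only
        rw [Real.norm_eq_abs, abs_mul, abs_mul (P z.2), abs_mul]
        rcases le_or_gt (abs (if z.2 < z.1 then (1:ℝ) else 0)) 1 with h | h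
        · nlinarith [abs_nonneg (P z.2), abs_nonneg (deriv f z.1),
            mul_nonneg (abs_nonneg (P z.2)) (abs_nonneg (deriv f z.1))]
        · exfalso
          split at h <;> simp at h <;> linarith
    have hswap := integral_integral_swap (f := H) hHint
    -- LHS : equals ∫ G * f'
    have hLHS : (∫ s, ∫ u, H s u ∂μ ∂μ) = ∫ s in Set.Ioo a t0, G s * deriv f s := by
      rw [hμ]
      apply setIntegral_congr_fun measurableSet_Ioo
      intro s hs
      simp only
      have e1 : ∀ u : ℝ, H s u = (Set.Iio s).indicator P u * deriv f s := by
        intro u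
        rw [hHdef, Set.indicator]
        simp only [Set.mem_Iio]
        split <;> ring
      rw [show (fun u => H s u) = fun u => (Set.Iio s).indicator P u * deriv f s by
        funext u; exact e1 u]
      rw [integral_mul_const, setIntegral_indicator measurableSet_Iio]
      rw [show Set.Ioo a t0 ∩ Set.Iio s = Set.Ioo a s by
        ext u; simp only [Set.mem_inter_iff, Set.mem_Ioo, Set.mem_Iio]
        constructor
        · rintro ⟨⟨h1, _⟩, h3⟩; exact ⟨h1, h3⟩
        · rintro ⟨h1, h2⟩; exact ⟨⟨h1, lt_trans h2 hs.2⟩, h2⟩]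
      rw [hGdef]
      simp only
      rw [intervalIntegral.integral_of_le hs.1.le, integral_Ioc_eq_integral_Ioo]
    -- RHS : equals ∫ P * (f t0 - f ·)
    have hRHS : (∫ u, ∫ s, H s u ∂μ ∂μ) = ∫ u in Set.Ioo a t0, P u * (f t0 - f u) := by
      rw [hμ]
      apply setIntegral_congr_fun measurableSet_Ioo
      intro u hu
      simp only
      have e1 : ∀ s : ℝ, H s u = P u * ((Set.Ioi u).indicator (deriv f) s) := by
        intro s
        rw [hHdef, Set.indicator]
        simp only [Set.mem_Ioi]
        split <;> ring
      rw [show (fun s => H s u) = fun s => P u * ((Set.Ioi u).indicator (deriv f) s) by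
        funext s; exact e1 s]
      rw [integral_const_mul, setIntegral_indicator measurableSet_Ioi]
      rw [show Set.Ioo a t0 ∩ Set.Ioi u = Set.Ioo u t0 by
        ext s; simp only [Set.mem_inter_iff, Set.mem_Ioo, Set.mem_Ioi]
        constructor
        · rintro ⟨⟨_, h2⟩, h3⟩; exact ⟨h3, h2⟩
        · rintro ⟨h1, h2⟩; exact ⟨⟨lt_trans hu.1 h1, h2⟩, h1⟩]
      have := hFTCf u ⟨hu.1.le, hu.2⟩
      rw [intervalIntegral.integral_of_le hu.2.le, integral_Ioc_eq_integral_Ioo] at this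
      rw [this]
    rw [← hLHS, hswap, hRHS]
  -- the Fubini'd term is nonpositive
  have hneg : ∫ u in Set.Ioo a t0, P u * (f t0 - f u) ≤ 0 := by
    apply integral_nonpos_of_ae
    have h : ∀ᵐ u ∂(volume.restrict (Set.Ioo a t0)), P u * (f t0 - f u) ≤ 0 := by
      rw [ae_restrict_iff' measurableSet_Ioo]
      refine ae_of_all _ fun u hu => ?_
      have hfu : f t0 ≤ f u := hmin u ⟨hu.1.le, le_trans hu.2.le ht0b⟩
      exact mul_nonpos_of_nonneg_of_nonpos (hPnn u) (by linarith)
    exact h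
  -- assemble
  rw [habc, hml, hsplit, hfub]
  calc Bα / (1-α) * (psi l α (t0-a) * (f t0 - f a) + ∫ u in Set.Ioo a t0, P u * (f t0 - f u))
      ≤ Bα / (1-α) * (psi l α (t0-a) * (f t0 - f a) + 0) := by
        apply mul_le_mul_of_nonneg_left ?_ hc.le
        linarith
    _ = Bα / (1-α) * psi l α (t0-a) * (f t0 - f a) := by ring
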